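/- Let (𝒳₀,𝒳₁) be a compatible couple of sequentially structured Banach spaces and let θ ∈ (0,1). The map f ↦ f̂_θ is an isometric isomorphism from ℋ_π(𝕊;𝒳₀,𝒳₁) onto 𝔖₀(e^{−θ}) ∩ 𝔖₁(e^{1−θ}), with inverse x⃗ ↦ (z ↦ Σ_{k∈ℤ} e^{k(z−θ)} x_k). -/

import Mathlib

open scoped ENNReal NNReal
open Filter Topology

universe u v

/-- The axioms of a complete ("Banach") extended norm on a module over a normed field:
definiteness, the triangle inequality, homogeneity, and completeness of the finiteness
domain.  A Banach space continuously embedded into an ambient space `E` is encoded as such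
an extended norm on `E`; the Banach space itself is the finiteness domain. -/
def IsBanachENorm (𝕜 : Type*) {E : Type*} [NormedField 𝕜] [AddCommGroup E] [Module 𝕜 E]
    (N : E → ℝ≥0∞) : Prop :=
  (∀ x : E, N x = 0 → x = 0) ∧
  (∀ x y : E, N (x + y) ≤ N x + N y) ∧
  (∀ (c : 𝕜) (x : E), N (c • x) ≤ (‖c‖₊ : ℝ≥0∞) * N x) ∧
  (∀ f : ℕ → E, (∀ n, N (f n) ≠ ∞) →
    (∀ ε : ℝ≥0∞, 0 < ε → ∃ n₀ : ℕ, ∀ m, n₀ ≤ m → ∀ n, n₀ ≤ n → N (f m - f n) < ε) →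
    ∃ x : E, N x ≠ ∞ ∧ Filter.Tendsto (fun n => N (f n - x)) Filter.atTop (nhds 0))

/-- A Banach space continuously embedded into the ambient space `E`, encoded as a complete
extended norm on `E`. -/
structure BanachENorm (𝕜 : Type*) (E : Type*) [NormedField 𝕜] [AddCommGroup E]
    [Module 𝕜 E] where
  toFun : E → ℝ≥0∞
  isBanachENorm : IsBanachENorm 𝕜 toFun

/-- A sequence structure `𝔖` on the Banach space `X`: a Banach space of `X`-valued sequences
which is translation invariant, contains the single-entry sequences isometrically, and has
contractive coordinate projections. -/
structure SeqStructure (𝕜 : Type*) (E : Type*) [NormedField 𝕜] [AddCommGroup E] [Module 𝕜 E]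
    (X : BanachENorm 𝕜 E) where
  toFun : (ℤ → E) → ℝ≥0∞
  isBanachENorm : IsBanachENorm 𝕜 toFun
  single : ∀ (v : E) (n : ℤ), toFun (fun k => if k = n then v else 0) = X.toFun v
  shift : ∀ (x : ℤ → E) (n : ℤ), toFun (fun k => x (k + n)) = toFun x
  coord : ∀ (x : ℤ → E) (n : ℤ), X.toFun (x n) ≤ toFun x

/-- The `n`-th Cesàro mean `C_n x⃗ = (n+1)⁻¹ ∑_{m=0}^{n} x⃗⁽ᵐ⁾`, where `x⃗⁽ᵐ⁾` is the
truncation of `x⃗` to the indices `|k| ≤ m`. -/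
noncomputable def cesaro (𝕜 : Type*) {E : Type*} [NormedField 𝕜] [AddCommGroup E]
    [Module 𝕜 E] (n : ℕ) (x : ℤ → E) : ℤ → E :=
  fun k => (n + 1 : 𝕜)⁻¹ • ∑ m ∈ Finset.range (n + 1), (if |k| ≤ (m : ℤ) then x k else 0)

/-- An `ℓ∞`-sequence structure: the Cesàro operators are contractive. -/
def IsLinftySeqStructure {𝕜 E : Type*} [NormedField 𝕜] [AddCommGroup E] [Module 𝕜 E]
    {X : BanachENorm 𝕜 E} (S : SeqStructure 𝕜 E X) : Prop :=
  ∀ (n : ℕ) (x : ℤ → E), S.toFun (cesaro 𝕜 n x) ≤ S.toFun x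

/-- A `c₀`-sequence structure: the Cesàro operators are contractive and `C_n x⃗ → x⃗` in `𝔖`
for every `x⃗ ∈ 𝔖`. -/
def IsC0SeqStructure {𝕜 E : Type*} [NormedField 𝕜] [AddCommGroup E] [Module 𝕜 E]
    {X : BanachENorm 𝕜 E} (S : SeqStructure 𝕜 E X) : Prop :=
  IsLinftySeqStructure S ∧
    ∀ x : ℤ → E, S.toFun x ≠ ∞ →
      Filter.Tendsto (fun n => S.toFun (cesaro 𝕜 n x - x)) Filter.atTop (nhds 0)

/-- The extended norm of the sum of two extended-normed spaces. -/
noncomputable def enSum {V : Type*} [AddCommGroup V] (N M : V → ℝ≥0∞) : V → ℝ≥0∞ :=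
  fun v => ⨅ w : V, N w + M (v - w)

/-- The extended norm of the intersection of two extended-normed spaces. -/
def enInter {V : Type*} (N M : V → ℝ≥0∞) : V → ℝ≥0∞ := fun v => max (N v) (M v)

/-- The weighted sequence space `𝔖(a)`, `‖x⃗‖_{𝔖(a)} = ‖(a^k x_k)_k‖_𝔖`. -/
noncomputable def wtSeq {E : Type*} [AddCommGroup E] [Module ℝ E] (a : ℝ)
    (S : (ℤ → E) → ℝ≥0∞) : (ℤ → E) → ℝ≥0∞ :=
  fun x => S fun k => (a ^ k) • x k

/-- The sequentially structured interpolation extended norm with base number `b`: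
`‖v‖_{(𝒳₀,𝒳₁)_{θ;b}} = inf { max_{j=0,1} ‖(b^{k(j-θ)} x_k)_k‖_{𝔖_j} : ∑_k x_k = v }`,
the sum converging in the sum space `X₀ + X₁` (the ambient space `E`). -/
noncomputable def interpENormB {E : Type*} [NormedAddCommGroup E] [NormedSpace ℝ E] (b : ℝ)
    (S₀ S₁ : (ℤ → E) → ℝ≥0∞) (θ : ℝ) (v : E) : ℝ≥0∞ :=
  ⨅ (x : ℤ → E) (_ : HasSum x v),
    max (wtSeq (b ^ (-θ)) S₀ x) (wtSeq (b ^ (1 - θ)) S₁ x)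

/-- The sequentially structured interpolation extended norm (base number `e`). -/
noncomputable def interpENorm {E : Type*} [NormedAddCommGroup E] [NormedSpace ℝ E]
    (S₀ S₁ : (ℤ → E) → ℝ≥0∞) (θ : ℝ) (v : E) : ℝ≥0∞ :=
  ⨅ (x : ℤ → E) (_ : HasSum x v),
    max (wtSeq (Real.exp (-θ)) S₀ x) (wtSeq (Real.exp (1 - θ)) S₁ x)

/-- The mean-method formulation of the interpolation norm. -/
noncomputable def meanENorm {E : Type*} [AddCommGroup E] [Module ℝ E]
    (S₀ S₁ : (ℤ → E) → ℝ≥0∞) (θ : ℝ) (v : E) : ℝ≥0∞ :=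
  ⨅ (x0 : ℤ → E) (x1 : ℤ → E) (_ : ∀ k : ℤ, x0 k + x1 k = v),
    wtSeq (Real.exp (-θ)) S₀ x0 + wtSeq (Real.exp (1 - θ)) S₁ x1

/-- The dual extended norm on linear functionals. -/
noncomputable def dualENorm {E : Type*} [AddCommGroup E] [Module ℝ E] (N : E → ℝ≥0∞)
    (φ : E →ₗ[ℝ] ℝ) : ℝ≥0∞ :=
  ⨆ (x : E) (_ : N x ≤ 1), (‖φ x‖₊ : ℝ≥0∞)

/-- The dual sequence norm, via the pairing `⟨x⃗, x⃗*⟩ = ∑_k ⟨x_k, x*_k⟩`. -/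
noncomputable def dualSeqENorm {E : Type*} [AddCommGroup E] [Module ℝ E]
    (S : (ℤ → E) → ℝ≥0∞) (Φ : ℤ → E →ₗ[ℝ] ℝ) : ℝ≥0∞ :=
  ⨆ (x : ℤ → E) (_ : (Function.support x).Finite) (_ : S x ≤ 1),
    (‖∑ᶠ k : ℤ, Φ k (x k)‖₊ : ℝ≥0∞)

/-- The interpolation norm of the dual couple `(𝒳₀*,𝒳₁*)_θ`
(in its mean-method formulation). -/
noncomputable def dualInterpMean {E : Type*} [AddCommGroup E] [Module ℝ E]
    (S₀ S₁ : (ℤ → E) → ℝ≥0∞) (θ : ℝ) (φ : E →ₗ[ℝ] ℝ) : ℝ≥0∞ :=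
  ⨅ (Φ₀ : ℤ → E →ₗ[ℝ] ℝ) (Φ₁ : ℤ → E →ₗ[ℝ] ℝ) (_ : ∀ k : ℤ, Φ₀ k + Φ₁ k = φ),
    wtSeq (Real.exp (-θ)) (dualSeqENorm S₀) Φ₀ +
      wtSeq (Real.exp (1 - θ)) (dualSeqENorm S₁) Φ₁

/-- Membership in the closure, inside the space with extended norm `Nj`, of the space with
extended norm `N`. -/
def memClosIn {E : Type*} [AddCommGroup E] (Nj N : E → ℝ≥0∞) (w : E) : Prop :=
  Nj w ≠ ∞ ∧ ∀ ε : ℝ≥0∞, 0 < ε → ∃ u : E, N u ≠ ∞ ∧ Nj (w - u) < ε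

open Classical in
/-- The extended norm of the closure, inside the space with extended norm `Nj`, of the
space with extended norm `N`. -/
noncomputable def closENorm {E : Type*} [AddCommGroup E] (Nj N : E → ℝ≥0∞) : E → ℝ≥0∞ :=
  fun w => if memClosIn Nj N w then Nj w else ∞

/-- Membership in `𝔖^∘`, the closure in `𝔖` of the finitely nonzero sequences with entries
in the closure of the `N`-space inside the `Nj`-space. -/
def memSeqClos {E : Type*} [AddCommGroup E] (S : (ℤ → E) → ℝ≥0∞) (Nj N : E → ℝ≥0∞)
    (x : ℤ → E) : Prop :=
  S x ≠ ∞ ∧ ∀ ε : ℝ≥0∞, 0 < ε → ∃ y : ℤ → E,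
    (Function.support y).Finite ∧ (∀ k, memClosIn Nj N (y k)) ∧ S (x - y) < ε

open Classical in
/-- The extended norm of `𝔖^∘`. -/
noncomputable def seqClosENorm {E : Type*} [AddCommGroup E] (S : (ℤ → E) → ℝ≥0∞)
    (Nj N : E → ℝ≥0∞) : (ℤ → E) → ℝ≥0∞ :=
  fun x => if memSeqClos S Nj N x then S x else ∞

/-- The `(𝔖,𝔗)`-bound of an operator. -/
noncomputable def seqOpENorm {E F : Type*} [AddCommGroup E] [Module ℝ E]
    [AddCommGroup F] [Module ℝ F] (S : (ℤ → E) → ℝ≥0∞) (T : (ℤ → F) → ℝ≥0∞)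
    (A : E →ₗ[ℝ] F) : ℝ≥0∞ :=
  ⨆ (x : ℤ → E) (_ : S x ≤ 1), T fun k => A (x k)

/-- The open strip `𝕊 = {0 < Re z < 1}`. -/
def openStrip : Set ℂ := {z : ℂ | 0 < z.re ∧ z.re < 1}

/-- The closed strip `S̄ = {0 ≤ Re z ≤ 1}`. -/
def closedStrip : Set ℂ := {z : ℂ | 0 ≤ z.re ∧ z.re ≤ 1}

/-- The `k`-th Fourier coefficient of the `2π`-periodic function `t ↦ f (s + it)`. -/
noncomputable def fourierCoef {X : Type*} [NormedAddCommGroup X] [NormedSpace ℂ X]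
    (f : ℂ → X) (s : ℝ) (k : ℤ) : X :=
  (2 * (Real.pi : ℂ))⁻¹ • ∫ t in (-Real.pi)..Real.pi,
    Complex.exp (-(k : ℂ) * Complex.I * (t : ℂ)) • f ((s : ℂ) + (t : ℂ) * Complex.I)

/-- The lower complex formulation norm `‖·‖^{(c)}_{(𝒳₀,𝒳₁)_θ}`. -/
noncomputable def lowerCNorm {E : Type*} [NormedAddCommGroup E] [NormedSpace ℂ E]
    (S₀ S₁ : (ℤ → E) → ℝ≥0∞) (θ : ℝ) (v : E) : ℝ≥0∞ :=
  ⨅ (f : ℂ → E) (_ : ContinuousOn f closedStrip)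
    (_ : ∀ z ∈ openStrip, DifferentiableAt ℂ f z)
    (_ : ∀ z ∈ closedStrip, f (z + 2 * (Real.pi : ℂ) * Complex.I) = f z)
    (_ : f (θ : ℂ) = v),
    max (S₀ fun k => fourierCoef f 0 k) (S₁ fun k => fourierCoef f 1 k)

lemma aux_exp_zpow (x : ℝ) (n : ℤ) : (Real.exp x) ^ n = Real.exp (n * x) := by
  rw [← Real.rpow_intCast, Real.rpow_def_of_pos (Real.exp_pos x), Real.log_exp, mul_comm]

lemma aux_kernel (n : ℤ) : (∫ t in (-Real.pi)..Real.pi, Complex.exp ((n:ℂ) * Complex.I * t))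
    = if n = 0 then (2 * (Real.pi : ℂ)) else 0 := by
  rcases eq_or_ne n 0 with h | h
  · subst h
    rw [if_pos rfl]
    simp only [Int.cast_zero, zero_mul, Complex.exp_zero]
    rw [intervalIntegral.integral_const, Complex.real_smul]
    push_cast
    ring
  · rw [if_neg h]
    have hc : (n:ℂ) * Complex.I ≠ 0 :=
      mul_ne_zero (by exact_mod_cast h) Complex.I_ne_zero
    rw [integral_exp_mul_complex hc]
    have : Complex.exp ((n:ℂ) * Complex.I * ((-Real.pi : ℝ) : ℂ))
        = Complex.exp ((n:ℂ) * Complex.I * (Real.pi : ℂ)) / Complex.exp ((n:ℂ) * (2 * Real.pi * Complex.I)) := by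
      rw [← Complex.exp_sub]
      congr 1
      push_cast
      ring
    rw [this, Complex.exp_int_mul_two_pi_mul_I, div_one, sub_self, zero_div]

noncomputable def auxU (C₀ C₁ a b : ℝ) (k : ℤ) : ℝ :=
  if 0 ≤ k then C₁ * Real.exp ((k:ℝ) * (b-1)) else C₀ * Real.exp ((k:ℝ) * a)

lemma auxU_nonneg {C₀ C₁ a b : ℝ} (hC₀ : 0 ≤ C₀) (hC₁ : 0 ≤ C₁) (k : ℤ) :
    0 ≤ auxU C₀ C₁ a b k := by
  unfold auxU; split <;> positivity

lemma auxU_summable {C₀ C₁ a b : ℝ} (hC₀ : 0 ≤ C₀) (hC₁ : 0 ≤ C₁) (ha : 0 < a) (hb : b < 1) :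
    Summable (auxU C₀ C₁ a b) := by
  apply Summable.of_nat_of_neg
  · have he : ∀ n : ℕ, auxU C₀ C₁ a b n = C₁ * (Real.exp (b-1))^n := by
      intro n
      rw [auxU, if_pos (Int.ofNat_nonneg n), ← Real.exp_nat_mul]
      push_cast
      ring_nf
    rw [summable_congr he]
    exact (summable_geometric_of_lt_one (Real.exp_nonneg _)
      (Real.exp_lt_one_iff.mpr (by linarith))).mul_left _
  · apply Summable.of_nonneg_of_le (f := fun n : ℕ => (C₀ + C₁) * (Real.exp (-a))^n)
      (fun n => auxU_nonneg hC₀ hC₁ _)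
    · intro n
      rcases Nat.eq_zero_or_pos n with h | h
      · subst h
        simp only [Nat.cast_zero, neg_zero, auxU, le_refl, if_pos, pow_zero, mul_one]
        simpa using by linarith
      · rw [auxU, if_neg (by omega : ¬ (0:ℤ) ≤ -(n:ℤ)), ← Real.exp_nat_mul]
        have : ((-(n:ℤ) : ℤ) : ℝ) * a = (n:ℝ) * (-a) := by push_cast; ring
        rw [this]
        exact mul_le_mul_of_nonneg_right (by linarith) (Real.exp_nonneg _)
    · exact (summable_geometric_of_lt_one (Real.exp_nonneg _)
        (Real.exp_lt_one_iff.mpr (by linarith))).mul_left _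

lemma auxU_bound {E : Type*} [NormedAddCommGroup E] [NormedSpace ℂ E]
    {C₀ C₁ a b θ : ℝ} {x : ℤ → E}
    (hx₀ : ∀ k : ℤ, ‖x k‖ ≤ C₀ * Real.exp (θ * k))
    (hx₁ : ∀ k : ℤ, ‖x k‖ ≤ C₁ * Real.exp ((θ - 1) * k))
    (k : ℤ) (w : ℂ) (hwa : a ≤ w.re) (hwb : w.re ≤ b) :
    ‖Complex.exp ((k:ℂ) * (w - (θ:ℂ))) • x k‖ ≤ auxU C₀ C₁ a b k := by
  rw [norm_smul, Complex.norm_exp]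
  have hre : ((k:ℂ) * (w - (θ:ℂ))).re = (k:ℝ) * (w.re - θ) := by
    simp [Complex.mul_re]
  rw [hre]
  by_cases hk : (0:ℤ) ≤ k
  · rw [auxU, if_pos hk]
    calc Real.exp ((k:ℝ) * (w.re - θ)) * ‖x k‖
        ≤ Real.exp ((k:ℝ) * (w.re - θ)) * (C₁ * Real.exp ((θ-1) * k)) :=
          mul_le_mul_of_nonneg_left (hx₁ k) (Real.exp_nonneg _)
      _ = C₁ * Real.exp ((k:ℝ) * (w.re - 1)) := by
          rw [mul_left_comm, ← Real.exp_add]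
          congr 1
          ring
      _ ≤ C₁ * Real.exp ((k:ℝ) * (b - 1)) := by
          have hC₁ : 0 ≤ C₁ := le_trans (norm_nonneg (x 0)) (by simpa using hx₁ 0)
          apply mul_le_mul_of_nonneg_left _ hC₁
          apply Real.exp_le_exp.mpr
          apply mul_le_mul_of_nonneg_left (by linarith) (by exact_mod_cast hk)
  · rw [auxU, if_neg hk]
    push_neg at hk
    calc Real.exp ((k:ℝ) * (w.re - θ)) * ‖x k‖
        ≤ Real.exp ((k:ℝ) * (w.re - θ)) * (C₀ * Real.exp (θ * k)) :=
          mul_le_mul_of_nonneg_left (hx₀ k) (Real.exp_nonneg _)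
      _ = C₀ * Real.exp ((k:ℝ) * w.re) := by
          rw [mul_left_comm, ← Real.exp_add]
          congr 1
          ring
      _ ≤ C₀ * Real.exp ((k:ℝ) * a) := by
          have hC₀ : 0 ≤ C₀ := le_trans (norm_nonneg (x 0)) (by simpa using hx₀ 0)
          apply mul_le_mul_of_nonneg_left _ hC₀
          apply Real.exp_le_exp.mpr
          have hkneg : (k:ℝ) ≤ 0 := by exact_mod_cast le_of_lt hk
          nlinarith
  
lemma aux_summable_term {E : Type*} [NormedAddCommGroup E] [NormedSpace ℂ E] [CompleteSpace E]
    {C₀ C₁ a b θ : ℝ} {x : ℤ → E} (hC₀ : 0 ≤ C₀) (hC₁ : 0 ≤ C₁) (ha : 0 < a) (hb : b < 1)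
    (hx₀ : ∀ k : ℤ, ‖x k‖ ≤ C₀ * Real.exp (θ * k))
    (hx₁ : ∀ k : ℤ, ‖x k‖ ≤ C₁ * Real.exp ((θ - 1) * k))
    (w : ℂ) (hwa : a ≤ w.re) (hwb : w.re ≤ b) :
    Summable (fun k : ℤ => Complex.exp ((k:ℂ) * (w - (θ:ℂ))) • x k) :=
  Summable.of_norm (Summable.of_nonneg_of_le (fun k => norm_nonneg _)
    (fun k => auxU_bound hx₀ hx₁ k w hwa hwb) (auxU_summable hC₀ hC₁ ha hb))

lemma aux_gdiff {E : Type*} [NormedAddCommGroup E] [NormedSpace ℂ E] [CompleteSpace E]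
    {C₀ C₁ a b θ : ℝ} {x : ℤ → E} (hC₀ : 0 ≤ C₀) (hC₁ : 0 ≤ C₁) (ha : 0 < a) (hb : b < 1)
    (hx₀ : ∀ k : ℤ, ‖x k‖ ≤ C₀ * Real.exp (θ * k))
    (hx₁ : ∀ k : ℤ, ‖x k‖ ≤ C₁ * Real.exp ((θ - 1) * k))
    (z : ℂ) (hza : a < z.re) (hzb : z.re < b) :
    DifferentiableAt ℂ (fun w => ∑' k : ℤ, Complex.exp ((k:ℂ) * (w - (θ:ℂ))) • x k) z := by
  set s : Set ℂ := {w | a < w.re ∧ w.re < b} with hs_def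
  have hs : IsOpen s :=
    IsOpen.and (isOpen_lt continuous_const Complex.continuous_re)
      (isOpen_lt Complex.continuous_re continuous_const)
  have ht : TendstoUniformlyOn
      (fun (T : Finset ℤ) w => ∑ k ∈ T, Complex.exp ((k:ℂ) * (w - (θ:ℂ))) • x k)
      (fun w => ∑' k : ℤ, Complex.exp ((k:ℂ) * (w - (θ:ℂ))) • x k) atTop s :=
    tendstoUniformlyOn_tsum (auxU_summable hC₀ hC₁ ha hb)
      (fun k w hw => auxU_bound hx₀ hx₁ k w hw.1.le hw.2.le)
  have hdiff : DifferentiableOn ℂ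
      (fun w => ∑' k : ℤ, Complex.exp ((k:ℂ) * (w - (θ:ℂ))) • x k) s := by
    apply ht.tendstoLocallyUniformlyOn.differentiableOn _ hs
    apply Filter.Eventually.of_forall
    intro T
    apply Differentiable.differentiableOn
    exact Differentiable.fun_sum fun k _ =>
      ((((differentiable_id (𝕜 := ℂ)).sub_const _).const_mul _).cexp).smul_const _
  exact hdiff.differentiableAt (hs.mem_nhds ⟨hza, hzb⟩)

section GCoef
variable {E : Type u} [NormedAddCommGroup E] [NormedSpace ℂ E] [CompleteSpace E]

lemma aux_re_line (s t : ℝ) : ((s:ℂ) + (t:ℂ) * Complex.I).re = s := by simp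

/-- The Fourier coefficients of the series `g(z) = ∑ₖ e^{k(z-θ)} xₖ`. -/
lemma aux_gcoef {C₀ C₁ θ : ℝ} {x : ℤ → E}
    (hC₀ : 0 ≤ C₀) (hC₁ : 0 ≤ C₁)
    (hx₀ : ∀ k : ℤ, ‖x k‖ ≤ C₀ * Real.exp (θ * k))
    (hx₁ : ∀ k : ℤ, ‖x k‖ ≤ C₁ * Real.exp ((θ - 1) * k))
    (s : ℝ) (hs0 : 0 < s) (hs1 : s < 1) (k : ℤ) :
    fourierCoef (fun z => ∑' m : ℤ, Complex.exp ((m:ℂ) * (z - (θ:ℂ))) • x m) s k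
      = Complex.exp ((k:ℂ) * ((s:ℂ) - (θ:ℂ))) • x k := by
  classical
  set F : ℤ → ℝ → E := fun m t =>
    (Complex.exp ((m:ℂ) * ((s:ℂ) - (θ:ℂ))) *
      Complex.exp (((m - k : ℤ):ℂ) * Complex.I * (t:ℂ))) • x m with hF
  have hsummable : ∀ t : ℝ,
      Summable (fun m : ℤ => Complex.exp ((m:ℂ) * (((s:ℂ) + (t:ℂ)*Complex.I) - (θ:ℂ))) • x m) := by
    intro t
    exact aux_summable_term hC₀ hC₁ hs0 hs1 hx₀ hx₁ _ (le_of_eq (aux_re_line s t).symm)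
      (le_of_eq (aux_re_line s t))
  -- pointwise identity for the integrand
  have hptwise : ∀ t : ℝ,
      Complex.exp (-(k : ℂ) * Complex.I * (t : ℂ)) •
        (∑' m : ℤ, Complex.exp ((m:ℂ) * (((s:ℂ) + (t:ℂ)*Complex.I) - (θ:ℂ))) • x m)
      = ∑' m : ℤ, F m t := by
    intro t
    rw [← ((hsummable t).hasSum.const_smul _).tsum_eq]
    congr 1
    funext m
    rw [smul_smul, hF]
    congr 1
    rw [← Complex.exp_add, ← Complex.exp_add]
    push_cast
    ring
  -- the L¹ bound
  have hFbound : ∀ m (t : ℝ), ‖F m t‖ ≤ auxU C₀ C₁ s s m := by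
    intro m t
    have h1 : ‖Complex.exp (((m - k : ℤ):ℂ) * Complex.I * (t:ℂ))‖ = 1 := by
      rw [Complex.norm_exp]
      have : ((((m - k : ℤ):ℂ)) * Complex.I * (t:ℂ)).re = 0 := by simp
      rw [this, Real.exp_zero]
    have h2 : ‖Complex.exp ((m:ℂ) * ((s:ℂ) - (θ:ℂ))) • x m‖ ≤ auxU C₀ C₁ s s m := by
      have := auxU_bound (a := s) (b := s) hx₀ hx₁ m ((s:ℂ)) (by simp) (by simp)
      simpa using this
    calc ‖F m t‖ = ‖Complex.exp (((m - k : ℤ):ℂ) * Complex.I * (t:ℂ))‖ *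
            ‖Complex.exp ((m:ℂ) * ((s:ℂ) - (θ:ℂ))) • x m‖ := by
          rw [hF, norm_smul, norm_mul, norm_smul]; ring
      _ ≤ auxU C₀ C₁ s s m := by rw [h1, one_mul]; exact h2
  have hFcont : ∀ m : ℤ, Continuous (F m) := by
    intro m
    exact (continuous_const.mul (Complex.continuous_exp.comp
      (continuous_const.mul Complex.continuous_ofReal))).smul continuous_const
  -- swap sum and integral
  have hswap : (∫ t in Set.Ioc (-Real.pi) Real.pi, ∑' m : ℤ, F m t)
      = ∑' m : ℤ, ∫ t in Set.Ioc (-Real.pi) Real.pi, F m t := by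
    apply MeasureTheory.integral_tsum
    · exact fun m => ((hFcont m).aestronglyMeasurable).restrict
    · have hvol : MeasureTheory.volume (Set.Ioc (-Real.pi) Real.pi) = ENNReal.ofReal (2*Real.pi) := by
        rw [Real.volume_Ioc]
        congr 1
        ring
      have hb : ∀ m : ℤ, (∫⁻ t in Set.Ioc (-Real.pi) Real.pi, ‖F m t‖₊)
          ≤ ((auxU C₀ C₁ s s m).toNNReal : ℝ≥0∞) * ENNReal.ofReal (2*Real.pi) := by
        intro m
        calc (∫⁻ t in Set.Ioc (-Real.pi) Real.pi, ‖F m t‖₊)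
            ≤ ∫⁻ _ in Set.Ioc (-Real.pi) Real.pi, ((auxU C₀ C₁ s s m).toNNReal : ℝ≥0∞) := by
              apply MeasureTheory.lintegral_mono
              intro t
              rw [ENNReal.coe_le_coe]
              rw [← norm_toNNReal]
              exact Real.toNNReal_mono (hFbound m t)
          _ = ((auxU C₀ C₁ s s m).toNNReal : ℝ≥0∞) * ENNReal.ofReal (2*Real.pi) := by
              rw [MeasureTheory.lintegral_const, MeasureTheory.Measure.restrict_apply MeasurableSet.univ,
                Set.univ_inter, hvol]
      refine ne_top_of_le_ne_top ?_ (le_trans (ENNReal.tsum_le_tsum hb)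
        (le_of_eq ENNReal.tsum_mul_right))
      apply ENNReal.mul_ne_top _ ENNReal.ofReal_ne_top
      rw [ENNReal.tsum_coe_ne_top_iff_summable]
      exact (auxU_summable hC₀ hC₁ hs0 hs1).toNNReal
  -- each summand integral
  have hint : ∀ m : ℤ, (∫ t in Set.Ioc (-Real.pi) Real.pi, F m t)
      = if m = k then (2*(Real.pi:ℂ)) • (Complex.exp ((k:ℂ)*((s:ℂ)-(θ:ℂ))) • x k) else 0 := by
    intro m
    have h1 : (∫ t in Set.Ioc (-Real.pi) Real.pi, F m t)
        = Complex.exp ((m:ℂ)*((s:ℂ)-(θ:ℂ))) •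
          ((∫ t in Set.Ioc (-Real.pi) Real.pi,
            Complex.exp (((m-k:ℤ):ℂ) * Complex.I * (t:ℂ))) • x m) := by
      rw [← integral_smul_const, ← MeasureTheory.integral_smul]
      congr 1
      funext t
      simp only [hF, mul_smul]
    have h2 : (∫ t in Set.Ioc (-Real.pi) Real.pi,
        Complex.exp (((m-k:ℤ):ℂ) * Complex.I * (t:ℂ)))
        = if (m - k : ℤ) = 0 then (2 * (Real.pi : ℂ)) else 0 := by
      rw [← intervalIntegral.integral_of_le (by linarith [Real.pi_pos] : -Real.pi ≤ Real.pi)]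
      exact aux_kernel (m - k)
    rcases eq_or_ne m k with h | h
    · subst h
      rw [if_pos rfl, h1, h2, if_pos (sub_self m), smul_comm]
    · rw [if_neg h, h1, h2, if_neg (sub_ne_zero_of_ne h), zero_smul, smul_zero]
  -- assemble
  have hfun : (fun t : ℝ => Complex.exp (-(k : ℂ) * Complex.I * (t : ℂ)) •
      (fun z => ∑' m : ℤ, Complex.exp ((m:ℂ) * (z - (θ:ℂ))) • x m) ((s : ℂ) + (t : ℂ) * Complex.I))
      = fun t : ℝ => ∑' m : ℤ, F m t := by
    funext t
    exact hptwise t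
  rw [fourierCoef, hfun,
    intervalIntegral.integral_of_le (by linarith [Real.pi_pos] : -Real.pi ≤ Real.pi),
    hswap, tsum_eq_single k (fun m hm => by rw [hint m, if_neg hm]), hint k, if_pos rfl,
    smul_smul, smul_smul]
  rw [inv_mul_cancel₀ (by
    simp [Real.pi_ne_zero] : (2 * (Real.pi:ℂ)) ≠ 0), one_mul]

end GCoef

section Shift
variable {E : Type u} [NormedAddCommGroup E] [NormedSpace ℂ E] [CompleteSpace E]

lemma aux_uIcc_mem {θ s x : ℝ} (hθ : θ ∈ Set.Ioo (0:ℝ) 1) (hs : s ∈ Set.Ioo (0:ℝ) 1)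
    (hx : x ∈ Set.uIcc θ s) : 0 < x ∧ x < 1 := by
  rw [Set.mem_uIcc] at hx
  obtain ⟨h1, h2⟩ := hθ; obtain ⟨h3, h4⟩ := hs
  rcases hx with ⟨ha, hb⟩ | ⟨ha, hb⟩ <;> constructor <;> linarith

lemma aux_coef_shift (f : ℂ → E)
    (hdiff : ∀ z ∈ openStrip, DifferentiableAt ℂ f z)
    (hper : ∀ z ∈ openStrip, f (z + 2 * (Real.pi : ℂ) * Complex.I) = f z)
    {θ s : ℝ} (hθ : θ ∈ Set.Ioo (0:ℝ) 1) (hs : s ∈ Set.Ioo (0:ℝ) 1) (k : ℤ) :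
    Complex.exp (-(k:ℂ) * (s:ℂ)) • fourierCoef f s k
      = Complex.exp (-(k:ℂ) * (θ:ℂ)) • fourierCoef f θ k := by
  have h2π : (2 * (Real.pi:ℂ)) ≠ 0 := by simp [Real.pi_ne_zero]
  set F : ℂ → E := fun w => Complex.exp (-(k:ℂ) * w) • f w with hFdef
  have key := Complex.integral_boundary_rect_eq_zero_of_differentiableOn F
      ((θ:ℂ) + ((-Real.pi : ℝ):ℂ) * Complex.I) ((s:ℂ) + ((Real.pi : ℝ):ℂ) * Complex.I) ?hd
  case hd =>
    intro p hp
    rw [Complex.mem_reProdIm] at hp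
    have e1 : ((θ:ℂ) + ((-Real.pi : ℝ):ℂ) * Complex.I).re = θ := by simp
    have e2 : ((s:ℂ) + ((Real.pi : ℝ):ℂ) * Complex.I).re = s := by simp
    rw [e1, e2] at hp
    have hmem : p ∈ openStrip := aux_uIcc_mem hθ hs hp.1
    exact (((differentiableAt_id.const_mul (-(k:ℂ))).cexp).smul (hdiff p hmem)).differentiableWithinAt
  have e1 : ((θ:ℂ) + ((-Real.pi : ℝ):ℂ) * Complex.I).re = θ := by simp
  have e2 : ((s:ℂ) + ((Real.pi : ℝ):ℂ) * Complex.I).re = s := by simp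
  have e3 : ((θ:ℂ) + ((-Real.pi : ℝ):ℂ) * Complex.I).im = -Real.pi := by simp
  have e4 : ((s:ℂ) + ((Real.pi : ℝ):ℂ) * Complex.I).im = Real.pi := by simp
  rw [e1, e2, e3, e4] at key
  have hcancel : (∫ x in θ..s, F ((x:ℂ) + ((-Real.pi:ℝ):ℂ) * Complex.I))
      = ∫ x in θ..s, F ((x:ℂ) + ((Real.pi:ℝ):ℂ) * Complex.I) := by
    apply intervalIntegral.integral_congr
    intro x hx
    have hx01 := aux_uIcc_mem hθ hs hx
    have hmem : ((x:ℂ) + ((-Real.pi:ℝ):ℂ) * Complex.I) ∈ openStrip := by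
      have : ((x:ℂ) + ((-Real.pi:ℝ):ℂ) * Complex.I).re = x := by simp
      simp only [openStrip, Set.mem_setOf_eq, this]
      exact hx01
    have hper' := hper _ hmem
    have harg : (x:ℂ) + ((-Real.pi:ℝ):ℂ) * Complex.I + 2*(Real.pi:ℂ)*Complex.I
        = (x:ℂ) + ((Real.pi:ℝ):ℂ) * Complex.I := by push_cast; ring
    simp only [hFdef]
    rw [← harg, hper']
    congr 1
    rw [show -(k:ℂ) * ((x:ℂ) + ((-Real.pi:ℝ):ℂ) * Complex.I + 2*(Real.pi:ℂ)*Complex.I)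
        = -(k:ℂ) * ((x:ℂ) + ((-Real.pi:ℝ):ℂ) * Complex.I) + ((-k : ℤ):ℂ) * (2*(Real.pi:ℂ)*Complex.I)
      by push_cast; ring, Complex.exp_add, Complex.exp_int_mul_two_pi_mul_I, mul_one]
  rw [hcancel] at key
  rw [sub_self, zero_add] at key
  have hBC : (∫ y in (-Real.pi)..Real.pi, F ((s:ℂ) + (y:ℝ) * Complex.I))
      = ∫ y in (-Real.pi)..Real.pi, F ((θ:ℂ) + (y:ℝ) * Complex.I) :=
    smul_right_injective E Complex.I_ne_zero (sub_eq_zero.mp key)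
  have hside : ∀ σ : ℝ, (∫ y in (-Real.pi)..Real.pi, F ((σ:ℂ) + (y:ℝ) * Complex.I))
      = Complex.exp (-(k:ℂ) * (σ:ℂ)) • ((2*(Real.pi:ℂ)) • fourierCoef f σ k) := by
    intro σ
    rw [fourierCoef, smul_smul (2*(Real.pi:ℂ)), mul_inv_cancel₀ h2π, one_smul,
      ← intervalIntegral.integral_smul]
    apply intervalIntegral.integral_congr
    intro y hy
    simp only [hFdef]
    rw [smul_smul, ← Complex.exp_add]
    congr 2
    push_cast
    ring
  rw [hside s, hside θ] at hBC
  rw [smul_comm _ (2*(Real.pi:ℂ)), smul_comm _ (2*(Real.pi:ℂ))] at hBC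
  exact smul_right_injective E h2π hBC

end Shift

section Uniq
variable {E : Type u} [NormedAddCommGroup E] [NormedSpace ℂ E] [CompleteSpace E]

lemma aux_fourier_uniq (u : ℝ → E) (hc : Continuous u)
    (hp : ∀ t : ℝ, u (t + 2 * Real.pi) = u t)
    (h0 : ∀ k : ℤ,
      (∫ t in (-Real.pi)..Real.pi, Complex.exp (-(k:ℂ) * Complex.I * (t:ℂ)) • u t) = 0)
    (t : ℝ) : u t = 0 := by
  have hπ : (0:ℝ) < 2 * Real.pi := by positivity
  haveI : Fact ((0:ℝ) < 2 * Real.pi) := ⟨hπ⟩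
  have hle : -Real.pi ≤ Real.pi := by linarith [Real.pi_pos]
  apply NormedSpace.eq_zero_of_forall_dual_eq_zero ℂ
  intro φ
  set v : ℝ → ℂ := fun r => φ (u r) with hv
  have hvc : Continuous v := φ.continuous.comp hc
  have hvp : Function.Periodic v (2 * Real.pi) := fun r => by simp only [hv, hp r]
  have hv0 : ∀ k : ℤ,
      (∫ s in (-Real.pi)..Real.pi, Complex.exp (-(k:ℂ) * Complex.I * (s:ℂ)) * v s) = 0 := by
    intro k
    have hInt : IntervalIntegrable
        (fun s : ℝ => Complex.exp (-(k:ℂ) * Complex.I * (s:ℂ)) • u s)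
        MeasureTheory.volume (-Real.pi) Real.pi :=
      ((Complex.continuous_exp.comp (continuous_const.mul
        Complex.continuous_ofReal)).smul hc).intervalIntegrable _ _
    have heq : (fun s : ℝ => Complex.exp (-(k:ℂ) * Complex.I * (s:ℂ)) * v s)
        = fun s : ℝ => φ (Complex.exp (-(k:ℂ) * Complex.I * (s:ℂ)) • u s) := by
      funext s
      rw [map_smul, smul_eq_mul]
    rw [heq, ContinuousLinearMap.intervalIntegral_comp_comm φ hInt, h0 k, map_zero]
  set V : AddCircle (2 * Real.pi) → ℂ := AddCircle.liftIco (2 * Real.pi) (-Real.pi) v with hV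
  have hVc : Continuous V :=
    AddCircle.liftIco_continuous (by rw [hvp (-Real.pi)]) hvc.continuousOn
  have hVcoef : ∀ n : ℤ, fourierCoeff V n = 0 := by
    intro n
    rw [fourierCoeff_eq_intervalIntegral V n (-Real.pi)]
    have h2 : (∫ x in (-Real.pi)..(-Real.pi + 2 * Real.pi),
          (fourier (-n)) (x : AddCircle (2 * Real.pi)) • V (x : AddCircle (2 * Real.pi)))
        = ∫ x in (-Real.pi)..Real.pi, Complex.exp (-(n:ℂ) * Complex.I * (x:ℂ)) * v x := by
      rw [show -Real.pi + 2 * Real.pi = Real.pi by ring]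
      rw [intervalIntegral.integral_of_le hle, intervalIntegral.integral_of_le hle,
        MeasureTheory.integral_Ioc_eq_integral_Ioo, MeasureTheory.integral_Ioc_eq_integral_Ioo]
      apply MeasureTheory.setIntegral_congr_fun measurableSet_Ioo
      intro x hx
      have hxmem : x ∈ Set.Ico (-Real.pi) (-Real.pi + 2 * Real.pi) :=
        ⟨hx.1.le, by linarith [hx.2]⟩
      show (fourier (-n)) (x : AddCircle (2 * Real.pi)) •
          AddCircle.liftIco (2 * Real.pi) (-Real.pi) v (x : AddCircle (2 * Real.pi))
        = Complex.exp (-(n:ℂ) * Complex.I * (x:ℂ)) * v x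
      rw [AddCircle.liftIco_coe_apply hxmem, fourier_coe_apply, smul_eq_mul]
      congr 2
      push_cast
      rw [div_eq_iff (by
        simp [Real.pi_ne_zero] : ((2:ℂ) * (Real.pi:ℂ)) ≠ 0)]
      ring
    rw [h2, hv0 n, smul_zero]
  have hV0 : ∀ q : AddCircle (2 * Real.pi), V q = 0 := by
    set fC : C(AddCircle (2 * Real.pi), ℂ) := ⟨V, hVc⟩ with hfC
    have hcoefC : fourierCoeff (⇑fC) = fun _ : ℤ => (0:ℂ) := funext fun n => hVcoef n
    have hsummable : Summable (fourierCoeff (⇑fC)) := by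
      rw [hcoefC]; exact summable_zero
    have hsum := hasSum_fourier_series_of_summable hsummable
    rw [hcoefC] at hsum
    simp only [zero_smul] at hsum
    have : fC = 0 := (hasSum_zero.unique hsum).symm
    intro q
    have := ContinuousMap.ext_iff.mp this q
    exact this
  have hper : Function.Periodic v (2 * Real.pi) := hvp
  set r : ℝ := toIcoMod hπ (-Real.pi) t with hr
  have hrmem : r ∈ Set.Ico (-Real.pi) (-Real.pi + 2 * Real.pi) := toIcoMod_mem_Ico hπ _ t
  have hvr : v r = v t := by
    rw [hr, ← self_sub_toIcoDiv_zsmul hπ (-Real.pi) t]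
    exact hper.sub_zsmul_eq _
  have : v t = 0 := by
    rw [← hvr, ← AddCircle.liftIco_coe_apply (f := v) hrmem, ← hV]
    exact hV0 _
  exact this

end Uniq

section Bounds
variable {E : Type u} [NormedAddCommGroup E] [NormedSpace ℂ E]

lemma aux_benorm_zero (N : BanachENorm ℂ E) : N.toFun 0 = 0 := by
  have := N.isBanachENorm.2.2.1 0 0
  simpa using this

lemma aux_norm_le (N₀ N₁ : BanachENorm ℂ E)
    (hcomp : ∀ v : E, enSum N₀.toFun N₁.toFun v = (‖v‖₊ : ℝ≥0∞)) (v : E) :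
    (‖v‖₊ : ℝ≥0∞) ≤ N₀.toFun v ∧ (‖v‖₊ : ℝ≥0∞) ≤ N₁.toFun v := by
  constructor
  · rw [← hcomp v]
    have h := iInf_le (fun w => N₀.toFun w + N₁.toFun (v - w)) v
    simpa [enSum, aux_benorm_zero] using h
  · rw [← hcomp v]
    have h := iInf_le (fun w => N₀.toFun w + N₁.toFun (v - w)) 0
    simpa [enSum, aux_benorm_zero] using h

/-- Coefficient bounds coming from finiteness of the intersection norm. -/
lemma aux_coef_bounds (N₀ N₁ : BanachENorm ℂ E)
    (hcomp : ∀ v : E, enSum N₀.toFun N₁.toFun v = (‖v‖₊ : ℝ≥0∞))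
    (S₀ : SeqStructure ℂ E N₀) (S₁ : SeqStructure ℂ E N₁) (θ : ℝ) (x : ℤ → E)
    (hfin : max (wtSeq (Real.exp (-θ)) S₀.toFun x) (wtSeq (Real.exp (1 - θ)) S₁.toFun x) ≠ ∞) :
    ∃ C₀ C₁ : ℝ, 0 ≤ C₀ ∧ 0 ≤ C₁ ∧
      (∀ k : ℤ, ‖x k‖ ≤ C₀ * Real.exp (θ * k)) ∧
      (∀ k : ℤ, ‖x k‖ ≤ C₁ * Real.exp ((θ - 1) * k)) := by
  have h₀ : wtSeq (Real.exp (-θ)) S₀.toFun x ≠ ∞ :=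
    fun h => hfin (by rw [max_eq_top]; exact Or.inl h)
  have h₁ : wtSeq (Real.exp (1 - θ)) S₁.toFun x ≠ ∞ :=
    fun h => hfin (by rw [max_eq_top]; exact Or.inr h)
  refine ⟨(wtSeq (Real.exp (-θ)) S₀.toFun x).toReal, (wtSeq (Real.exp (1-θ)) S₁.toFun x).toReal,
    ENNReal.toReal_nonneg, ENNReal.toReal_nonneg, ?_, ?_⟩
  · intro k
    have hc := (S₀.coord (fun k => (Real.exp (-θ)) ^ k • x k) k)
    have hn : (‖(Real.exp (-θ)) ^ k • x k‖₊ : ℝ≥0∞) ≤ wtSeq (Real.exp (-θ)) S₀.toFun x :=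
      le_trans (aux_norm_le N₀ N₁ hcomp _).1 hc
    have hr : ‖(Real.exp (-θ)) ^ k • x k‖ ≤ (wtSeq (Real.exp (-θ)) S₀.toFun x).toReal := by
      have := ENNReal.toReal_mono h₀ hn
      simpa using this
    rw [norm_smul] at hr
    rw [aux_exp_zpow] at hr
    have hepos : (0:ℝ) < Real.exp ((k:ℝ) * (-θ)) := Real.exp_pos _
    rw [Real.norm_eq_abs, abs_of_pos hepos] at hr
    have := mul_le_mul_of_nonneg_right hr (Real.exp_nonneg (θ * k))
    calc ‖x k‖ = Real.exp ((k:ℝ) * (-θ)) * ‖x k‖ * Real.exp (θ * k) := by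
          rw [mul_comm (Real.exp ((k:ℝ) * (-θ))) ‖x k‖, mul_assoc, ← Real.exp_add]
          ring_nf
          rw [Real.exp_zero, mul_one]
      _ ≤ _ := this
  · intro k
    have hc := (S₁.coord (fun k => (Real.exp (1-θ)) ^ k • x k) k)
    have hn : (‖(Real.exp (1-θ)) ^ k • x k‖₊ : ℝ≥0∞) ≤ wtSeq (Real.exp (1-θ)) S₁.toFun x :=
      le_trans (aux_norm_le N₀ N₁ hcomp _).2 hc
    have hr : ‖(Real.exp (1-θ)) ^ k • x k‖ ≤ (wtSeq (Real.exp (1-θ)) S₁.toFun x).toReal := by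
      have := ENNReal.toReal_mono h₁ hn
      simpa using this
    rw [norm_smul, aux_exp_zpow] at hr
    have hepos : (0:ℝ) < Real.exp ((k:ℝ) * (1-θ)) := Real.exp_pos _
    rw [Real.norm_eq_abs, abs_of_pos hepos] at hr
    have := mul_le_mul_of_nonneg_right hr (Real.exp_nonneg ((θ-1) * k))
    calc ‖x k‖ = Real.exp ((k:ℝ) * (1-θ)) * ‖x k‖ * Real.exp ((θ-1) * k) := by
          rw [mul_comm (Real.exp ((k:ℝ) * (1-θ))) ‖x k‖, mul_assoc, ← Real.exp_add]
          ring_nf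
          rw [Real.exp_zero, mul_one]
      _ ≤ _ := this

end Bounds

/-- The map `f ↦ f̂_θ` is an isometric isomorphism from
`ℋ_π(𝕊;𝒳₀,𝒳₁)` onto `𝔖₀(e^{-θ}) ∩ 𝔖₁(e^{1-θ})`, with inverse
`x⃗ ↦ (z ↦ ∑_k e^{k(z-θ)} x_k)`.  Since the `ℋ_π(𝕊;𝒳₀,𝒳₁)`-norm of `f` is by definition
the `𝔖₀(e^{-θ}) ∩ 𝔖₁(e^{1-θ})`-norm of `f̂_θ`, the content is: every
`f ∈ ℋ_π(𝕊;𝒳₀,𝒳₁)` is recovered from `f̂_θ` by the inverse formula, and every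
`x⃗ ∈ 𝔖₀(e^{-θ}) ∩ 𝔖₁(e^{1-θ})` arises as `ĝ_θ` for the (analytic, `2πi`-periodic)
function `g(z) = ∑_k e^{k(z-θ)} x_k`. -/
theorem statement13 {E : Type u} [NormedAddCommGroup E] [NormedSpace ℂ E] [CompleteSpace E]
    (N₀ N₁ : BanachENorm ℂ E)
    (hcomp : ∀ v : E, enSum N₀.toFun N₁.toFun v = (‖v‖₊ : ℝ≥0∞))
    (S₀ : SeqStructure ℂ E N₀) (S₁ : SeqStructure ℂ E N₁)
    (θ : ℝ) (hθ : θ ∈ Set.Ioo (0 : ℝ) 1) :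
    (∀ f : ℂ → E, (∀ z ∈ openStrip, DifferentiableAt ℂ f z) →
      (∀ z ∈ openStrip, f (z + 2 * (Real.pi : ℂ) * Complex.I) = f z) →
      max (wtSeq (Real.exp (-θ)) S₀.toFun (fourierCoef f θ))
          (wtSeq (Real.exp (1 - θ)) S₁.toFun (fourierCoef f θ)) ≠ ∞ →
      ∀ z ∈ openStrip,
        HasSum (fun k : ℤ =>
          Complex.exp ((k : ℂ) * (z - (θ : ℂ))) • fourierCoef f θ k) (f z)) ∧
    (∀ x : ℤ → E,
      max (wtSeq (Real.exp (-θ)) S₀.toFun x) (wtSeq (Real.exp (1 - θ)) S₁.toFun x) ≠ ∞ →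
      ∃ g : ℂ → E,
        (∀ z ∈ openStrip,
          HasSum (fun k : ℤ => Complex.exp ((k : ℂ) * (z - (θ : ℂ))) • x k) (g z)) ∧
        (∀ z ∈ openStrip, DifferentiableAt ℂ g z) ∧
        (∀ z ∈ openStrip, g (z + 2 * (Real.pi : ℂ) * Complex.I) = g z) ∧
        (∀ k : ℤ, fourierCoef g θ k = x k)) := by
  have h2π : (2 * (Real.pi:ℂ)) ≠ 0 := by simp [Real.pi_ne_zero]
  constructor
  · -- Part 1
    intro f hdiff hper hfin z hz
    obtain ⟨C₀, C₁, hC₀, hC₁, hx₀, hx₁⟩ := aux_coef_bounds N₀ N₁ hcomp S₀ S₁ θ _ hfin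
    set g : ℂ → E := fun w => ∑' k : ℤ, Complex.exp ((k:ℂ) * (w - (θ:ℂ))) • fourierCoef f θ k
      with hgdef
    have hsum : HasSum (fun k : ℤ => Complex.exp ((k:ℂ) * (z - (θ:ℂ))) • fourierCoef f θ k)
        (g z) :=
      (aux_summable_term hC₀ hC₁ hz.1 hz.2 hx₀ hx₁ z le_rfl le_rfl).hasSum
    suffices hfg : f z = g z by rwa [hfg]
    set s : ℝ := z.re with hs_def
    have hs : s ∈ Set.Ioo (0:ℝ) 1 := hz
    -- g is differentiable and periodic on the strip
    have hgdiff : ∀ w ∈ openStrip, DifferentiableAt ℂ g w := by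
      intro w hw
      exact aux_gdiff (a := w.re/2) (b := (w.re+1)/2) hC₀ hC₁
        (by simp only [openStrip, Set.mem_setOf_eq] at hw; linarith [hw.1])
        (by simp only [openStrip, Set.mem_setOf_eq] at hw; linarith [hw.2])
        hx₀ hx₁ w (by simp only [openStrip, Set.mem_setOf_eq] at hw; linarith [hw.1])
        (by simp only [openStrip, Set.mem_setOf_eq] at hw; linarith [hw.2])
    have hgper : ∀ w ∈ openStrip, g (w + 2 * (Real.pi:ℂ) * Complex.I) = g w := by
      intro w _
      apply tsum_congr
      intro k
      congr 1
      rw [show (k:ℂ) * (w + 2*(Real.pi:ℂ)*Complex.I - (θ:ℂ))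
          = (k:ℂ) * (w - (θ:ℂ)) + (k:ℂ) * (2*(Real.pi:ℂ)*Complex.I) by ring,
        Complex.exp_add, Complex.exp_int_mul_two_pi_mul_I, mul_one]
    -- the vertical-line function
    have hmemline : ∀ t : ℝ, ((s:ℂ) + (t:ℂ) * Complex.I) ∈ openStrip := by
      intro t
      simp only [openStrip, Set.mem_setOf_eq, aux_re_line]
      exact hs
    have hline : ∀ (F : ℂ → E), (∀ w ∈ openStrip, DifferentiableAt ℂ F w) →
        Continuous (fun t : ℝ => F ((s:ℂ) + (t:ℂ) * Complex.I)) := by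
      intro F hF
      rw [continuous_iff_continuousAt]
      intro t
      exact ContinuousAt.comp (hF _ (hmemline t)).continuousAt
        ((continuous_const.add (Complex.continuous_ofReal.mul continuous_const)).continuousAt)
    set d : ℝ → E := fun t => f ((s:ℂ) + (t:ℂ)*Complex.I) - g ((s:ℂ) + (t:ℂ)*Complex.I)
      with hd_def
    have hdc : Continuous d := (hline f hdiff).sub (hline g hgdiff)
    have hdp : ∀ t : ℝ, d (t + 2*Real.pi) = d t := by
      intro t
      have harg : (s:ℂ) + ((t + 2*Real.pi : ℝ):ℂ)*Complex.I
          = ((s:ℂ) + (t:ℂ)*Complex.I) + 2*(Real.pi:ℂ)*Complex.I := by push_cast; ring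
      simp only [hd_def, harg, hper _ (hmemline t), hgper _ (hmemline t)]
    -- the Fourier coefficients of the difference vanish
    have hcoef0 : ∀ k : ℤ,
        (∫ t in (-Real.pi)..Real.pi, Complex.exp (-(k:ℂ)*Complex.I*(t:ℂ)) • d t) = 0 := by
      intro k
      have hIf : IntervalIntegrable
          (fun t : ℝ => Complex.exp (-(k:ℂ)*Complex.I*(t:ℂ)) • f ((s:ℂ)+(t:ℂ)*Complex.I))
          MeasureTheory.volume (-Real.pi) Real.pi :=
        ((Complex.continuous_exp.comp (continuous_const.mul
          Complex.continuous_ofReal)).smul (hline f hdiff)).intervalIntegrable _ _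
      have hIg : IntervalIntegrable
          (fun t : ℝ => Complex.exp (-(k:ℂ)*Complex.I*(t:ℂ)) • g ((s:ℂ)+(t:ℂ)*Complex.I))
          MeasureTheory.volume (-Real.pi) Real.pi :=
        ((Complex.continuous_exp.comp (continuous_const.mul
          Complex.continuous_ofReal)).smul (hline g hgdiff)).intervalIntegrable _ _
      have hsplit : (fun t : ℝ => Complex.exp (-(k:ℂ)*Complex.I*(t:ℂ)) • d t)
          = fun t : ℝ => (Complex.exp (-(k:ℂ)*Complex.I*(t:ℂ)) • f ((s:ℂ)+(t:ℂ)*Complex.I))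
            - (Complex.exp (-(k:ℂ)*Complex.I*(t:ℂ)) • g ((s:ℂ)+(t:ℂ)*Complex.I)) := by
        funext t
        simp only [hd_def, smul_sub]
      rw [hsplit, intervalIntegral.integral_sub hIf hIg]
      have hIf2 : (∫ t in (-Real.pi)..Real.pi,
          Complex.exp (-(k:ℂ)*Complex.I*(t:ℂ)) • f ((s:ℂ)+(t:ℂ)*Complex.I))
          = (2*(Real.pi:ℂ)) • fourierCoef f s k := by
        rw [fourierCoef, smul_smul, mul_inv_cancel₀ h2π, one_smul]
      have hIg2 : (∫ t in (-Real.pi)..Real.pi,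
          Complex.exp (-(k:ℂ)*Complex.I*(t:ℂ)) • g ((s:ℂ)+(t:ℂ)*Complex.I))
          = (2*(Real.pi:ℂ)) • fourierCoef g s k := by
        rw [fourierCoef, smul_smul, mul_inv_cancel₀ h2π, one_smul]
      rw [hIf2, hIg2, sub_eq_zero]
      congr 1
      have hshift := aux_coef_shift f hdiff hper hθ hs k
      have hgc := aux_gcoef hC₀ hC₁ hx₀ hx₁ s hs.1 hs.2 k
      have hf_s : fourierCoef f s k
          = Complex.exp ((k:ℂ)*((s:ℂ)-(θ:ℂ))) • fourierCoef f θ k := by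
        have h2 := congrArg (fun w : E => Complex.exp ((k:ℂ)*(s:ℂ)) • w) hshift
        rw [smul_smul, smul_smul, ← Complex.exp_add, ← Complex.exp_add,
          show (k:ℂ)*(s:ℂ) + -(k:ℂ)*(s:ℂ) = 0 by ring, Complex.exp_zero, one_smul,
          show (k:ℂ)*(s:ℂ) + -(k:ℂ)*(θ:ℂ) = (k:ℂ)*((s:ℂ)-(θ:ℂ)) by ring] at h2
        exact h2
      rw [hf_s, hgdef, hgc]
    have hzero := aux_fourier_uniq d hdc hdp hcoef0 z.im
    have hz' : (s:ℂ) + (z.im:ℂ)*Complex.I = z := Complex.re_add_im z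
    simp only [hd_def, hz'] at hzero
    exact sub_eq_zero.mp hzero
  · -- Part 2
    intro x hfin
    obtain ⟨C₀, C₁, hC₀, hC₁, hx₀, hx₁⟩ := aux_coef_bounds N₀ N₁ hcomp S₀ S₁ θ x hfin
    refine ⟨fun w => ∑' k : ℤ, Complex.exp ((k:ℂ) * (w - (θ:ℂ))) • x k, ?_, ?_, ?_, ?_⟩
    · intro z hz
      exact (aux_summable_term hC₀ hC₁ hz.1 hz.2 hx₀ hx₁ z le_rfl le_rfl).hasSum
    · intro z hz
      exact aux_gdiff (a := z.re/2) (b := (z.re+1)/2) hC₀ hC₁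
        (by simp only [openStrip, Set.mem_setOf_eq] at hz; linarith [hz.1])
        (by simp only [openStrip, Set.mem_setOf_eq] at hz; linarith [hz.2])
        hx₀ hx₁ z (by simp only [openStrip, Set.mem_setOf_eq] at hz; linarith [hz.1])
        (by simp only [openStrip, Set.mem_setOf_eq] at hz; linarith [hz.2])
    · intro z _
      apply tsum_congr
      intro k
      congr 1
      rw [show (k:ℂ) * (z + 2*(Real.pi:ℂ)*Complex.I - (θ:ℂ))
          = (k:ℂ) * (z - (θ:ℂ)) + (k:ℂ) * (2*(Real.pi:ℂ)*Complex.I) by ring,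
        Complex.exp_add, Complex.exp_int_mul_two_pi_mul_I, mul_one]
    · intro k
      rw [aux_gcoef hC₀ hC₁ hx₀ hx₁ θ hθ.1 hθ.2 k, sub_self, mul_zero, Complex.exp_zero,
        one_smul]
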